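/- As n → ∞, (R*_n − R_n)/σ_n → 0 in probability, i.e. for every ε > 0, P(|R*_n − R_n| ≥ ε σ_n) → 0. -/

import Mathlib

open MeasureTheory ProbabilityTheory Filter Topology

open scoped ENNReal
open Real (exp)

set_option maxHeartbeats 1000000

lemma PRDkey1 (x : ℝ) : x * exp (-x) ≤ 1 - exp (-x) := by
  have h1 := Real.add_one_le_exp x
  have h2 : exp (-x) * exp x = 1 := by rw [← Real.exp_add]; simp
  nlinarith [Real.exp_pos (-x)]
lemma key2 (x : ℝ) : x * exp (-x) ≤ exp (-1) := by
  have h1 := Real.add_one_le_exp (x - 1)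
  have h2 : exp (x-1) * exp (-x) = exp (-1) := by rw [← Real.exp_add]; ring_nf
  nlinarith [Real.exp_pos (-x), Real.exp_pos (x-1)]
lemma key3 {y : ℝ} (h0 : 0 ≤ y) (h1 : y ≤ 1) : y / 2 ≤ 1 - exp (-y) := by
  have h2 := Real.add_one_le_exp y
  have h3 : exp (-y) * exp y = 1 := by rw [← Real.exp_add]; simp
  nlinarith [Real.exp_pos (-y), Real.exp_pos y]
lemma sqrt_exp_neg (y : ℝ) : Real.sqrt (exp (-y)) = exp (-(y/2)) := by
  have h : exp (-y) = (exp (-(y/2)))^2 := by rw [sq, ← Real.exp_add]; ring_nf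
  rw [h, Real.sqrt_sq (le_of_lt (Real.exp_pos _))]
lemma exp_half_le_two : exp ((1:ℝ)/2) ≤ 2 := by
  have h2 : exp ((1:ℝ)/2) * exp ((1:ℝ)/2) = exp 1 := by rw [← Real.exp_add]; norm_num
  nlinarith [Real.exp_one_lt_d9, Real.exp_pos ((1:ℝ)/2)]
lemma exp_neg_half_ge : (1:ℝ)/2 ≤ exp (-(1/2)) := by
  rw [Real.exp_neg, ← one_div, le_div_iff₀ (Real.exp_pos _)]
  nlinarith [exp_half_le_two, Real.exp_pos ((1:ℝ)/2)]
lemma exp_neg_one_le : exp (-(1:ℝ)) ≤ 1/2 := by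
  rw [Real.exp_neg, ← one_div, div_le_div_iff₀ (Real.exp_pos _) (by norm_num)]
  nlinarith [Real.exp_one_gt_d9]

lemma key5 {y : ℝ} (h0 : 0 ≤ y) :
    y * exp (-(3/4) * y) ≤ 3 * Real.sqrt (exp (-y) * (1 - exp (-y))) := by
  have hex : (0:ℝ) ≤ 1 - exp (-y) := by
    have : exp (-y) ≤ 1 := by rw [Real.exp_le_one_iff]; linarith
    linarith
  have hsplit : Real.sqrt (exp (-y) * (1 - exp (-y)))
      = exp (-(y/2)) * Real.sqrt (1 - exp (-y)) := by
    rw [Real.sqrt_mul (le_of_lt (Real.exp_pos _)), sqrt_exp_neg]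
  rw [hsplit]
  rcases le_total y 1 with hy1 | hy1
  · have l1 : y * exp (-(3/4)*y) ≤ y := by
      have : exp (-(3/4)*y) ≤ 1 := by rw [Real.exp_le_one_iff]; linarith
      nlinarith
    have l2 : Real.sqrt (y/2) ≤ Real.sqrt (1 - exp (-y)) :=
      Real.sqrt_le_sqrt (key3 h0 hy1)
    have l3 : Real.sqrt (y/2) = Real.sqrt y / Real.sqrt 2 :=
      Real.sqrt_div' y (by norm_num)
    have l5 : (1:ℝ)/2 ≤ exp (-(y/2)) := by
      calc (1:ℝ)/2 ≤ exp (-(1/2)) := exp_neg_half_ge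
        _ ≤ exp (-(y/2)) := Real.exp_le_exp.mpr (by linarith)
    have l6 : y ≤ Real.sqrt y := by
      nlinarith [Real.sq_sqrt h0, Real.sqrt_nonneg y, Real.sqrt_le_sqrt hy1, Real.sqrt_one]
    have h2 : Real.sqrt 2 ≤ 3/2 := by
      rw [show (3:ℝ)/2 = Real.sqrt ((3/2)^2) from (Real.sqrt_sq (by norm_num)).symm]
      apply Real.sqrt_le_sqrt; norm_num
    have h2p : (0:ℝ) < Real.sqrt 2 := Real.sqrt_pos.mpr (by norm_num)
    have l7 : Real.sqrt y ≤ (3/2) * (Real.sqrt y / Real.sqrt 2) := by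
      rw [mul_div_assoc', le_div_iff₀ h2p]
      nlinarith [Real.sqrt_nonneg y]
    calc y * exp (-(3/4)*y) ≤ y := l1
      _ ≤ Real.sqrt y := l6
      _ ≤ (3/2) * (Real.sqrt y / Real.sqrt 2) := l7
      _ = 3 * ((1/2) * Real.sqrt (y/2)) := by rw [l3]; ring
      _ ≤ 3 * (exp (-(y/2)) * Real.sqrt (1 - exp (-y))) := by
          nlinarith [l2, l5, Real.sqrt_nonneg (1 - exp (-y)), Real.sqrt_nonneg (y/2)]
  · have e1 : exp (-(y/2)) * exp (-(y/4)) = exp (-(3/4)*y) := by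
      rw [← Real.exp_add]; ring_nf
    have l2 : y * exp (-(y/4)) ≤ 3/2 := by
      have h := key2 (y/4)
      have he : exp (-(1:ℝ)) ≤ 3/8 := by
        rw [Real.exp_neg, ← one_div, div_le_div_iff₀ (Real.exp_pos _) (by norm_num)]
        nlinarith [Real.exp_one_gt_d9]
      nlinarith [Real.exp_pos (-(y/4))]
    have l3 : (1:ℝ)/2 ≤ 1 - exp (-y) := by
      have : exp (-y) ≤ exp (-(1:ℝ)) := Real.exp_le_exp.mpr (by linarith)
      linarith [exp_neg_one_le]
    have l4 : (1:ℝ)/2 ≤ Real.sqrt (1 - exp (-y)) := by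
      calc (1:ℝ)/2 = Real.sqrt ((1/2)^2) := (Real.sqrt_sq (by norm_num)).symm
        _ ≤ Real.sqrt (1 - exp (-y)) := Real.sqrt_le_sqrt (by nlinarith)
    calc y * exp (-(3/4)*y) = exp (-(y/2)) * (y * exp (-(y/4))) := by rw [← e1]; ring
      _ ≤ exp (-(y/2)) * (3/2) := by nlinarith [Real.exp_pos (-(y/2))]
      _ ≤ 3 * (exp (-(y/2)) * Real.sqrt (1 - exp (-y))) := by
          nlinarith [Real.exp_pos (-(y/2))]

lemma hs_exp (t : ℝ) : HasSum (fun k : ℕ => t^k / k.factorial) (exp t) := by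
  rw [Real.exp_eq_exp_ℝ]; exact NormedSpace.expSeries_div_hasSum_exp t

lemma hs_k_exp (t : ℝ) : HasSum (fun k : ℕ => (k:ℝ) * t^k / k.factorial) (t * exp t) := by
  set f : ℕ → ℝ := fun k => (k:ℝ) * t^k / k.factorial with hf
  have heq : (fun k : ℕ => f (k + 1)) = fun k => t * (t^k / k.factorial) := by
    funext k
    simp only [hf]
    push_cast [Nat.factorial_succ, pow_succ]
    field_simp
  have h2 : HasSum (fun k : ℕ => f (k+1)) (t * exp t) := by
    rw [heq]; exact (hs_exp t).mul_left t
  have h3 := (hasSum_nat_add_iff (f := f) 1).mp h2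
  simpa [hf] using h3

lemma hs_kk_exp (t : ℝ) :
    HasSum (fun k : ℕ => (k:ℝ) * ((k:ℝ)-1) * t^k / k.factorial) (t^2 * exp t) := by
  set f : ℕ → ℝ := fun k => (k:ℝ) * ((k:ℝ)-1) * t^k / k.factorial with hf
  have heq : (fun k : ℕ => f (k + 2)) = fun k => t^2 * (t^k / k.factorial) := by
    funext k
    simp only [hf]
    push_cast [Nat.factorial_succ, pow_succ]
    field_simp
    ring
  have h2 : HasSum (fun k : ℕ => f (k+2)) (t^2 * exp t) := by
    rw [heq]; exact (hs_exp t).mul_left (t^2)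
  have h3 := (hasSum_nat_add_iff (f := f) 2).mp h2
  simpa [hf, Finset.sum_range_succ] using h3

lemma hs_poisson_var (t : ℝ) :
    HasSum (fun k : ℕ => ((k:ℝ) - t)^2 * t^k / k.factorial) (t * exp t) := by
  have h0 := (hs_exp t).mul_left (t^2)
  have h1 := (hs_k_exp t).mul_left (1 - 2*t)
  have h2 := hs_kk_exp t
  have h := (h2.add h1).add h0
  have heq : (fun k : ℕ => (k:ℝ) * ((k:ℝ)-1) * t^k / k.factorial
      + (1 - 2*t) * ((k:ℝ) * t^k / k.factorial) + t^2 * (t^k / k.factorial))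
      = fun k : ℕ => ((k:ℝ) - t)^2 * t^k / k.factorial := by
    funext k
    have hk : (k.factorial : ℝ) ≠ 0 := Nat.cast_ne_zero.mpr k.factorial_ne_zero
    field_simp
    ring
  rw [heq] at h
  convert h using 1
  ring

lemma key4 {y : ℝ} (h0 : 0 ≤ y) : y * exp (-(3/2) * y) ≤ 2 * (exp (-y) * (1 - exp (-y))) := by
  have h1 := PRDkey1 (y/2)
  have e1 : exp (-(3/2)*y) = exp (-y) * exp (-(y/2)) := by rw [← Real.exp_add]; ring_nf
  have e2 : 1 - exp (-(y/2)) ≤ 1 - exp (-y) := by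
    have : exp (-y) ≤ exp (-(y/2)) := Real.exp_le_exp.mpr (by linarith)
    linarith
  calc y * exp (-(3/2)*y) = 2 * exp (-y) * (y/2 * exp (-(y/2))) := by rw [e1]; ring
    _ ≤ 2 * exp (-y) * (1 - exp (-(y/2))) := by have := Real.exp_pos (-y); nlinarith
    _ ≤ 2 * (exp (-y) * (1 - exp (-y))) := by have := Real.exp_pos (-y); nlinarith

lemma sqrt_amgm {A B lam : ℝ} (hA : 0 ≤ A) (hB : 0 ≤ B) (hl : 0 < lam) :
    Real.sqrt (A * B) ≤ (A / lam + lam * B) / 2 := by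
  have h1 : Real.sqrt (A * B) = Real.sqrt (A / lam) * Real.sqrt (lam * B) := by
    rw [← Real.sqrt_mul (by positivity)]
    congr 1
    field_simp
  nlinarith [sq_nonneg (Real.sqrt (A/lam) - Real.sqrt (lam*B)),
    Real.sq_sqrt (show (0:ℝ) ≤ A/lam by positivity),
    Real.sq_sqrt (show (0:ℝ) ≤ lam*B by positivity),
    Real.sqrt_nonneg (A/lam), Real.sqrt_nonneg (lam*B), h1]



lemma analytic_main (p : ℕ → ℝ) (hppos : ∀ i, 0 < p i) (hpsum : HasSum p 1)
    (η : ℝ) (hη : 0 < η) :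
    ∀ᶠ n : ℕ in atTop,
      Real.sqrt n * ∑' i, p i * exp (-(3/4) * n * p i)
        ≤ η * Real.sqrt (∑' i, exp (-(n:ℝ) * p i) * (1 - exp (-(n:ℝ) * p i))) := by
  have hps : Summable p := hpsum.summable
  have hexple1 : ∀ (n : ℕ) (i : ℕ), exp (-(n:ℝ) * p i) ≤ 1 := by
    intro n i
    rw [Real.exp_le_one_iff]
    have : (0:ℝ) ≤ (n:ℝ) * p i := by have := (hppos i).le; positivity
    linarith
  have hVnn : ∀ (n : ℕ) (i : ℕ), 0 ≤ exp (-(n:ℝ) * p i) * (1 - exp (-(n:ℝ) * p i)) := by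
    intro n i
    have := hexple1 n i
    have := Real.exp_pos (-(n:ℝ) * p i)
    nlinarith
  have hVsum : ∀ n : ℕ, Summable (fun i => exp (-(n:ℝ) * p i) * (1 - exp (-(n:ℝ) * p i))) := by
    intro n
    apply Summable.of_nonneg_of_le (hVnn n) (fun i => ?_) (hps.mul_left (n:ℝ))
    have h1 : 1 - exp (-(n:ℝ) * p i) ≤ (n:ℝ) * p i := by
      have := Real.add_one_le_exp (-(n:ℝ) * p i)
      linarith
    have h2 := hexple1 n i
    have h3 : (0:ℝ) ≤ (n:ℝ) * p i := by have := (hppos i).le; positivity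
    nlinarith [Real.exp_pos (-(n:ℝ) * p i)]
  have hS1nn : ∀ (n : ℕ) (i : ℕ), 0 ≤ p i * exp (-(3/4) * n * p i) := by
    intro n i
    have := (hppos i).le
    positivity
  have hS1sum : ∀ n : ℕ, Summable (fun i => p i * exp (-(3/4) * n * p i)) := by
    intro n
    apply Summable.of_nonneg_of_le (hS1nn n) (fun i => ?_) hps
    have h0 : (0:ℝ) ≤ (3/4) * n * p i := by have := (hppos i).le; positivity
    have h1 : exp (-(3/4) * n * p i) ≤ 1 := by
      rw [Real.exp_le_one_iff]
      linarith
    nlinarith [(hppos i).le]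
  obtain ⟨I, hI⟩ : ∃ I : ℕ, ∑' i, p (i + I) < η^2/8 := by
    have h := tendsto_sum_nat_add p
    exact (h.eventually (eventually_lt_nhds (show (0:ℝ) < η^2/8 by positivity))).exists
  have htail_sum : Summable (fun i => p (i + I)) := (summable_nat_add_iff I).mpr hps
  set δ' : ℝ := ∑' i, p (i + I) with hδ'
  have hδ'pos : 0 < δ' := by
    have h0 : p (0 + I) ≤ δ' := Summable.le_tsum htail_sum 0 (fun j _ => (hppos _).le)
    have := hppos (0 + I)
    linarith
  rw [eventually_atTop]
  refine ⟨max 1 (Nat.ceil ((6*I/η)^2)), fun n hn => ?_⟩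
  have hn1 : 1 ≤ n := le_trans (le_max_left _ _) hn
  have hnR : (1:ℝ) ≤ n := by exact_mod_cast hn1
  have hsn : (0:ℝ) < Real.sqrt n := Real.sqrt_pos.mpr (by linarith)
  have hsqn : Real.sqrt n * Real.sqrt n = n := Real.mul_self_sqrt (by linarith)
  set V : ℝ := ∑' i, exp (-(n:ℝ) * p i) * (1 - exp (-(n:ℝ) * p i)) with hV
  have hVpos : 0 < V := by
    have h1 : exp (-(n:ℝ) * p 0) < 1 := by
      rw [Real.exp_lt_one_iff]
      have := hppos 0
      nlinarith
    have h0 : 0 < exp (-(n:ℝ) * p 0) * (1 - exp (-(n:ℝ) * p 0)) := by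
      nlinarith [Real.exp_pos (-(n:ℝ) * p 0)]
    have := Summable.le_tsum (hVsum n) 0 (fun j _ => hVnn n j)
    linarith
  have hsV : 0 < Real.sqrt V := Real.sqrt_pos.mpr hVpos
  have hterm : ∀ i, Real.sqrt n * (p i * exp (-(3/4) * n * p i))
      ≤ 3 / Real.sqrt n * Real.sqrt (exp (-(n:ℝ) * p i) * (1 - exp (-(n:ℝ) * p i))) := by
    intro i
    have hy : (0:ℝ) ≤ (n:ℝ) * p i := by have := (hppos i).le; positivity
    have h5 := key5 hy
    have h5' : (n:ℝ) * p i * exp (-(3/4) * n * p i)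
        ≤ 3 * Real.sqrt (exp (-(n:ℝ) * p i) * (1 - exp (-(n:ℝ) * p i))) := by
      have e1 : -(3/4) * ((n:ℝ) * p i) = -(3/4) * n * p i := by ring
      have e2 : -((n:ℝ) * p i) = -(n:ℝ) * p i := by ring
      rwa [e1, e2] at h5
    rw [div_mul_eq_mul_div, le_div_iff₀ hsn]
    calc Real.sqrt n * (p i * exp (-(3/4) * n * p i)) * Real.sqrt n
        = (n:ℝ) * p i * exp (-(3/4) * n * p i) := by
          linear_combination (p i * exp (-(3/4) * n * p i)) * hsqn
      _ ≤ 3 * Real.sqrt (exp (-(n:ℝ) * p i) * (1 - exp (-(n:ℝ) * p i))) := h5'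
  have hhead : Real.sqrt n * ∑ i ∈ Finset.range I, p i * exp (-(3/4) * n * p i)
      ≤ (η/2) * Real.sqrt V := by
    have hIb : (6*I/η)^2 ≤ (n:ℝ) := by
      have h := le_trans (le_max_right 1 (Nat.ceil ((6*I/η)^2))) hn
      calc (6*I/η)^2 ≤ (Nat.ceil ((6*I/η)^2) : ℝ) := Nat.le_ceil _
        _ ≤ n := by exact_mod_cast h
    have h6I : 6*I/η ≤ Real.sqrt n := by
      rcases le_or_gt ((6:ℝ)*I/η) 0 with h | h
      · linarith [hsn.le]
      · calc (6*I/η : ℝ) = Real.sqrt ((6*I/η)^2) := (Real.sqrt_sq h.le).symm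
          _ ≤ Real.sqrt n := Real.sqrt_le_sqrt hIb
    have hc : (I:ℝ) * (3 / Real.sqrt n) ≤ η/2 := by
      have h1 : 6*(I:ℝ) ≤ Real.sqrt n * η := by
        rw [div_le_iff₀ hη] at h6I
        linarith
      rw [mul_div_assoc', div_le_iff₀ hsn]
      nlinarith
    calc Real.sqrt n * ∑ i ∈ Finset.range I, p i * exp (-(3/4) * n * p i)
        = ∑ i ∈ Finset.range I, Real.sqrt n * (p i * exp (-(3/4) * n * p i)) := by
          rw [Finset.mul_sum]
      _ ≤ ∑ i ∈ Finset.range I, 3 / Real.sqrt n * Real.sqrt V := by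
          apply Finset.sum_le_sum
          intro i _
          refine le_trans (hterm i) ?_
          have h4 : Real.sqrt (exp (-(n:ℝ) * p i) * (1 - exp (-(n:ℝ) * p i))) ≤ Real.sqrt V :=
            Real.sqrt_le_sqrt (Summable.le_tsum (hVsum n) i (fun j _ => hVnn n j))
          have h3 : (0:ℝ) < 3 / Real.sqrt n := by positivity
          nlinarith
      _ = (I:ℝ) * (3 / Real.sqrt n) * Real.sqrt V := by
          rw [Finset.sum_const, Finset.card_range]; push_cast; ring
      _ ≤ (η/2) * Real.sqrt V := by nlinarith [hsV.le]
  have htail : Real.sqrt n * ∑' i, p (i + I) * exp (-(3/4) * n * p (i + I))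
      ≤ (η/2) * Real.sqrt V := by
    set lam : ℝ := Real.sqrt δ' / Real.sqrt (2 * V) with hlam
    have h2V : (0:ℝ) < 2 * V := by linarith
    have hlampos : 0 < lam := div_pos (Real.sqrt_pos.mpr hδ'pos) (Real.sqrt_pos.mpr h2V)
    have hterm2 : ∀ i, Real.sqrt n * (p (i + I) * exp (-(3/4) * n * p (i + I)))
        ≤ (p (i + I) / lam + lam * ((n:ℝ) * p (i + I) * exp (-(3/2) * n * p (i + I)))) / 2 := by
      intro i
      have hpi := (hppos (i + I)).le
      have hB : (0:ℝ) ≤ (n:ℝ) * p (i + I) * exp (-(3/2) * n * p (i + I)) := by positivity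
      have key := sqrt_amgm hpi hB hlampos
      have heq : Real.sqrt (p (i + I) * ((n:ℝ) * p (i + I) * exp (-(3/2) * n * p (i + I))))
          = Real.sqrt n * (p (i + I) * exp (-(3/4) * n * p (i + I))) := by
        have e2 : exp (-(3/2) * n * p (i+I))
            = exp (-(3/4) * n * p (i+I)) * exp (-(3/4) * n * p (i+I)) := by
          rw [← Real.exp_add]; ring_nf
        have e1 : p (i + I) * ((n:ℝ) * p (i + I) * exp (-(3/2) * n * p (i + I)))
            = ((Real.sqrt n * (p (i + I) * exp (-(3/4) * n * p (i + I)))))^2 := by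
          rw [e2, mul_pow, Real.sq_sqrt (show (0:ℝ) ≤ (n:ℝ) by linarith)]
          ring
        rw [e1, Real.sqrt_sq (by positivity)]
      rw [heq] at key
      exact key
    -- summability of pieces
    have hW : ∀ i : ℕ, (n:ℝ) * p (i + I) * exp (-(3/2) * n * p (i + I))
        ≤ 2 * (exp (-(n:ℝ) * p (i+I)) * (1 - exp (-(n:ℝ) * p (i+I)))) := by
      intro i
      have hy : (0:ℝ) ≤ (n:ℝ) * p (i + I) := by have := (hppos (i+I)).le; positivity
      have h4 := key4 hy
      have e1 : -(3/2) * ((n:ℝ) * p (i+I)) = -(3/2) * n * p (i+I) := by ring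
      have e2 : -((n:ℝ) * p (i+I)) = -(n:ℝ) * p (i+I) := by ring
      rwa [e1, e2] at h4
    have hWnn : ∀ i : ℕ, (0:ℝ) ≤ (n:ℝ) * p (i + I) * exp (-(3/2) * n * p (i + I)) := by
      intro i
      have := (hppos (i+I)).le
      positivity
    have hVtail : Summable (fun i => exp (-(n:ℝ) * p (i+I)) * (1 - exp (-(n:ℝ) * p (i+I)))) :=
      (summable_nat_add_iff I).mpr (hVsum n)
    have hWsum : Summable (fun i => (n:ℝ) * p (i + I) * exp (-(3/2) * n * p (i + I))) :=
      Summable.of_nonneg_of_le hWnn (fun i => hW i) (hVtail.mul_left 2)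
    have hWle : ∑' i, (n:ℝ) * p (i + I) * exp (-(3/2) * n * p (i + I)) ≤ 2 * V := by
      calc ∑' i, (n:ℝ) * p (i + I) * exp (-(3/2) * n * p (i + I))
          ≤ ∑' i, 2 * (exp (-(n:ℝ) * p (i+I)) * (1 - exp (-(n:ℝ) * p (i+I)))) :=
            Summable.tsum_le_tsum hW hWsum (hVtail.mul_left 2)
        _ = 2 * ∑' i, exp (-(n:ℝ) * p (i+I)) * (1 - exp (-(n:ℝ) * p (i+I))) := tsum_mul_left
        _ ≤ 2 * V := by
            have hle : ∑' i, exp (-(n:ℝ) * p (i+I)) * (1 - exp (-(n:ℝ) * p (i+I))) ≤ V := by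
              rw [hV, ← Summable.sum_add_tsum_nat_add I (hVsum n)]
              have : 0 ≤ ∑ i ∈ Finset.range I, exp (-(n:ℝ) * p i) * (1 - exp (-(n:ℝ) * p i)) :=
                Finset.sum_nonneg (fun i _ => hVnn n i)
              linarith
            linarith
    have hLsum : Summable (fun i => Real.sqrt n * (p (i + I) * exp (-(3/4) * n * p (i + I)))) :=
      ((summable_nat_add_iff I).mpr (hS1sum n)).mul_left _
    have hRsum : Summable (fun i =>
        (p (i + I) / lam + lam * ((n:ℝ) * p (i + I) * exp (-(3/2) * n * p (i + I)))) / 2) := by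
      apply Summable.div_const
      exact Summable.add (htail_sum.div_const lam) (hWsum.mul_left lam)
    calc Real.sqrt n * ∑' i, p (i + I) * exp (-(3/4) * n * p (i + I))
        = ∑' i, Real.sqrt n * (p (i + I) * exp (-(3/4) * n * p (i + I))) := tsum_mul_left.symm
      _ ≤ ∑' i, (p (i + I) / lam + lam * ((n:ℝ) * p (i + I) * exp (-(3/2) * n * p (i + I)))) / 2 :=
          Summable.tsum_le_tsum hterm2 hLsum hRsum
      _ = ((∑' i, p (i + I)) / lam + lam * ∑' i, (n:ℝ) * p (i + I) * exp (-(3/2) * n * p (i + I))) / 2 := by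
          rw [tsum_div_const, Summable.tsum_add (htail_sum.div_const lam) (hWsum.mul_left lam),
            tsum_div_const, tsum_mul_left]
      _ ≤ (δ' / lam + lam * (2 * V)) / 2 := by
          have h1 : 0 ≤ lam := hlampos.le
          have h2 : δ' / lam ≤ δ' / lam := le_refl _
          have := hWle
          nlinarith
      _ = Real.sqrt δ' * Real.sqrt (2 * V) := by
          have hsd : (0:ℝ) < Real.sqrt δ' := Real.sqrt_pos.mpr hδ'pos
          have hs2V : (0:ℝ) < Real.sqrt (2*V) := Real.sqrt_pos.mpr h2V
          have h1 : δ' / lam = Real.sqrt δ' * Real.sqrt (2*V) := by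
            rw [hlam, div_div_eq_mul_div]
            nth_rewrite 1 [← Real.mul_self_sqrt hδ'pos.le]
            field_simp
          have h2 : lam * (2*V) = Real.sqrt δ' * Real.sqrt (2*V) := by
            rw [hlam, div_mul_eq_mul_div]
            nth_rewrite 1 [← Real.mul_self_sqrt h2V.le]
            field_simp
          rw [h1, h2]
          ring
      _ ≤ (η/2) * Real.sqrt V := by
          have e1 : Real.sqrt (2 * V) = Real.sqrt 2 * Real.sqrt V := Real.sqrt_mul (by norm_num) V
          have e2 : Real.sqrt δ' * Real.sqrt 2 = Real.sqrt (2 * δ') := by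
            rw [Real.sqrt_mul (by norm_num : (0:ℝ) ≤ 2) δ']; ring
          have e3 : Real.sqrt (2 * δ') ≤ η/2 := by
            have : 2 * δ' ≤ (η/2)^2 := by nlinarith
            calc Real.sqrt (2*δ') ≤ Real.sqrt ((η/2)^2) := Real.sqrt_le_sqrt this
              _ = η/2 := Real.sqrt_sq (by positivity)
          have e4 : Real.sqrt δ' * Real.sqrt (2 * V) = Real.sqrt (2*δ') * Real.sqrt V := by
            rw [e1, ← e2]; ring
          rw [e4]
          exact mul_le_mul_of_nonneg_right e3 hsV.le
  calc Real.sqrt n * ∑' i, p i * exp (-(3/4) * n * p i)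
      = Real.sqrt n * ((∑ i ∈ Finset.range I, p i * exp (-(3/4) * n * p i))
          + ∑' i, p (i + I) * exp (-(3/4) * n * p (i + I))) := by
        rw [Summable.sum_add_tsum_nat_add I (hS1sum n)]
    _ = Real.sqrt n * (∑ i ∈ Finset.range I, p i * exp (-(3/4) * n * p i))
          + Real.sqrt n * ∑' i, p (i + I) * exp (-(3/4) * n * p (i + I)) := by ring
    _ ≤ (η/2) * Real.sqrt V + (η/2) * Real.sqrt V := add_le_add hhead htail
    _ = η * Real.sqrt V := by ring




lemma PRDcard_tsum (s : Finset ℕ) :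
    (s.card : ℝ≥0∞) = ∑' i : ℕ, if i ∈ s then (1:ℝ≥0∞) else 0 := by
  rw [tsum_eq_sum (s := s) (fun i hi => by simp [hi])]
  simp

/-- `(R*_n − R_n)/σ_n → 0` in probability: for every `ε > 0`,
`P(|R*_n − R_n| ≥ ε σ_n) → 0`, where `R*_t = R_{N_t}` and `(N_t)` is a standard rate-1
Poisson process independent of the i.i.d. sequence `ξ`. -/
theorem poissonized_range_difference_in_probability
    {Ω : Type*} [MeasurableSpace Ω] (P : Measure Ω) [IsProbabilityMeasure P]
    (π : ℕ → ℝ) (hπpos : ∀ i, 0 < π i) (hπmono : ∀ i, π (i + 1) ≤ π i)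
    (hπsum : HasSum π 1)
    (ξ : ℕ → Ω → ℕ) (hξmeas : ∀ k, Measurable (ξ k))
    (hξindep : iIndepFun ξ P)
    (hξlaw : ∀ k i, P {ω | ξ k ω = i} = ENNReal.ofReal (π i))
    (R : ℕ → Ω → ℕ)
    (hR : ∀ n ω, R n ω = ((Finset.range n).image fun k => ξ k ω).card)
    (μ : ℝ → ℝ) (hμ : ∀ t, μ t = ∑' i, (1 - Real.exp (-t * π i)))
    (σ : ℝ → ℝ) (hσ : ∀ t, σ t = Real.sqrt (μ (2 * t) - μ t))
    -- (N_t) is a standard rate-1 Poisson process: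
    (N : ℝ → Ω → ℕ) (hNmeas : ∀ t, Measurable (N t))
    (hN0 : ∀ ω, N 0 ω = 0)
    (hNmono : ∀ ω, Monotone fun t => N t ω)
    (hNlaw : ∀ s t : ℝ, 0 ≤ s → s ≤ t → ∀ k : ℕ,
      P {ω | N t ω - N s ω = k} =
        ENNReal.ofReal (Real.exp (-(t - s)) * (t - s) ^ k / Nat.factorial k))
    (hNincr : ∀ (m : ℕ) (t : ℕ → ℝ), (∀ i, 0 ≤ t i) → Monotone t →
      iIndepFun
        (fun i : Fin m => fun ω => N (t (i + 1)) ω - N (t i) ω) P)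
    -- the process N is independent of the sequence ξ:
    (hNξ : Indep (⨆ t : ℝ, MeasurableSpace.comap (N t) inferInstance)
        (⨆ k : ℕ, MeasurableSpace.comap (ξ k) inferInstance) P) :
    ∀ ε : ℝ, 0 < ε →
      Tendsto (fun n : ℕ =>
          (P {ω | ε * σ n ≤ |(R (N n ω) ω : ℝ) - (R n ω : ℝ)|}).toReal)
        atTop (𝓝 0) := by
  intro ε hε
  classical
  -- basic facts about π
  have hπle1 : ∀ i, π i ≤ 1 := fun i =>
    le_hasSum hπsum i (fun j _ => (hπpos j).le)
  have hπs : Summable π := hπsum.summable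
  -- the image finsets
  set img : ℕ → Ω → Finset ℕ := fun m ω => (Finset.range m).image fun k => ξ k ω with himg
  -- miss sets and their probabilities
  set Miss : ℕ → ℕ → Set Ω := fun m i => ⋂ k ∈ Finset.range m, {ω | ξ k ω ≠ i} with hMiss
  have hMissMeas : ∀ m i, MeasurableSet (Miss m i) := by
    intro m i
    apply MeasurableSet.biInter (Finset.range m).countable_toSet
    intro k _
    exact (hξmeas k (measurableSet_singleton i)).compl
  have hMissMem : ∀ m i ω, ω ∈ Miss m i ↔ i ∉ img m ω := by
    intro m i ω
    simp only [hMiss, Set.mem_iInter, Set.mem_setOf_eq, himg, Finset.mem_image,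
      Finset.mem_range]
    push_neg
    tauto
  have hMissP : ∀ m i, P (Miss m i) = ENNReal.ofReal ((1 - π i)^m) := by
    intro m i
    have hprod := hξindep.meas_biInter (S := Finset.range m)
      (s := fun k => {ω | ξ k ω ≠ i}) (fun k _ => ⟨{i}ᶜ, (measurableSet_singleton i).compl,
        by ext ω; simp⟩)
    rw [hMiss]
    rw [hprod]
    have hone : ∀ k : ℕ, P {ω | ξ k ω ≠ i} = ENNReal.ofReal (1 - π i) := by
      intro k
      have hc : {ω | ξ k ω ≠ i} = {ω | ξ k ω = i}ᶜ := by ext ω; simp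
      rw [hc, prob_compl_eq_one_sub (s := {ω | ξ k ω = i})
          (hξmeas k (measurableSet_singleton i)), hξlaw k i,
        ENNReal.ofReal_sub 1 (hπpos i).le, ENNReal.ofReal_one]
    calc ∏ k ∈ Finset.range m, P {ω | ξ k ω ≠ i}
        = ∏ k ∈ Finset.range m, ENNReal.ofReal (1 - π i) := by
          exact Finset.prod_congr rfl (fun k _ => hone k)
      _ = (ENNReal.ofReal (1 - π i))^m := by rw [Finset.prod_const, Finset.card_range]
      _ = ENNReal.ofReal ((1 - π i)^m) := (ENNReal.ofReal_pow (by linarith [hπle1 i]) m).symm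
  have hMissSub : ∀ {c b : ℕ}, c ≤ b → ∀ i, Miss b i ⊆ Miss c i := by
    intro c b hcb i ω hω
    simp only [hMiss, Set.mem_iInter] at hω ⊢
    intro k hk
    exact hω k (Finset.mem_range.mpr (lt_of_lt_of_le (Finset.mem_range.mp hk) hcb))

  -- variance quantity V
  set V : ℕ → ℝ := fun n => ∑' i, exp (-(n:ℝ) * π i) * (1 - exp (-(n:ℝ) * π i)) with hVdef
  have hexple1 : ∀ (t : ℝ), 0 ≤ t → ∀ i, exp (-t * π i) ≤ 1 := by
    intro t ht i
    rw [Real.exp_le_one_iff]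
    have : 0 ≤ t * π i := mul_nonneg ht (hπpos i).le
    linarith
  have hsum1 : ∀ (t : ℝ), 0 ≤ t → Summable (fun i => 1 - exp (-t * π i)) := by
    intro t ht
    apply Summable.of_nonneg_of_le (fun i => by linarith [hexple1 t ht i]) (fun i => ?_)
      (hπs.mul_left t)
    have h1 := Real.add_one_le_exp (-t * π i)
    linarith
  have hμV : ∀ n : ℕ, μ (2*(n:ℝ)) - μ (n:ℝ) = V n := by
    intro n
    have hn0 : (0:ℝ) ≤ (n:ℝ) := Nat.cast_nonneg n
    have h2n0 : (0:ℝ) ≤ 2*(n:ℝ) := by linarith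
    rw [hμ, hμ, hVdef]
    rw [← Summable.tsum_sub (hsum1 _ h2n0) (hsum1 _ hn0)]
    congr 1
    funext i
    have he : exp (-(2*(n:ℝ)) * π i) = exp (-(n:ℝ) * π i) * exp (-(n:ℝ) * π i) := by
      rw [← Real.exp_add]; ring_nf
    rw [he]
    ring
  have hVnnterm : ∀ (n : ℕ) (i : ℕ), 0 ≤ exp (-(n:ℝ) * π i) * (1 - exp (-(n:ℝ) * π i)) := by
    intro n i
    have h1 := hexple1 (n:ℝ) (Nat.cast_nonneg n) i
    nlinarith [Real.exp_pos (-(n:ℝ) * π i)]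
  have hVsum : ∀ n : ℕ, Summable (fun i => exp (-(n:ℝ) * π i) * (1 - exp (-(n:ℝ) * π i))) := by
    intro n
    apply Summable.of_nonneg_of_le (hVnnterm n) (fun i => ?_) (hsum1 (n:ℝ) (Nat.cast_nonneg n))
    have h1 := hexple1 (n:ℝ) (Nat.cast_nonneg n) i
    have h2 : 0 ≤ 1 - exp (-(n:ℝ) * π i) := by linarith
    nlinarith [Real.exp_pos (-(n:ℝ) * π i)]
  have hVpos : ∀ n : ℕ, 1 ≤ n → 0 < V n := by
    intro n hn
    have h1 : exp (-(n:ℝ) * π 0) < 1 := by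
      rw [Real.exp_lt_one_iff]
      have : (1:ℝ) ≤ (n:ℝ) := by exact_mod_cast hn
      nlinarith [hπpos 0]
    have h0 : 0 < exp (-(n:ℝ) * π 0) * (1 - exp (-(n:ℝ) * π 0)) := by
      nlinarith [Real.exp_pos (-(n:ℝ) * π 0)]
    have hle := Summable.le_tsum (hVsum n) 0 (fun j _ => hVnnterm n j)
    rw [hVdef]
    dsimp only
    linarith
  have hσV : ∀ n : ℕ, σ (n:ℝ) = Real.sqrt (V n) := by
    intro n
    rw [hσ, hμV]
  -- window sums
  have hqnn : ∀ (i c b : ℕ), c ≤ b → 0 ≤ (1 - π i)^c - (1 - π i)^b := by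
    intro i c b hcb
    have h0 : 0 ≤ 1 - π i := by linarith [hπle1 i]
    have := pow_le_pow_of_le_one h0 (by linarith [hπpos i]) hcb
    linarith
  have hqBern : ∀ (i m : ℕ), 1 - (1 - π i)^m ≤ m * π i := by
    intro i m
    have := one_add_mul_le_pow (a := -π i) (by linarith [hπle1 i]) m
    have h2 : 1 + (m:ℝ) * (-π i) ≤ (1 - π i)^m := by
      calc 1 + (m:ℝ) * (-π i) ≤ (1 + (-π i))^m := this
        _ = (1 - π i)^m := by ring_nf
    nlinarith
  have hqsum : ∀ (c b : ℕ), c ≤ b → Summable (fun i => (1 - π i)^c - (1 - π i)^b) := by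
    intro c b hcb
    apply Summable.of_nonneg_of_le (fun i => hqnn i c b hcb) (fun i => ?_)
      (hπs.mul_left (b:ℝ))
    have h0 : 0 ≤ 1 - π i := by linarith [hπle1 i]
    have h1 : 1 - (1 - π i)^b ≤ (b:ℝ) * π i := hqBern i b
    have h2 : (1 - π i)^c ≤ 1 := pow_le_one₀ h0 (by linarith [hπpos i])
    linarith

  -- thewindow counting function
  set F : ℕ → ℕ → Ω → ℝ≥0∞ := fun c b ω =>
    ∑' i, (Miss c i \ Miss b i).indicator (1 : Ω → ℝ≥0∞) ω with hFdef
  have hFmeas : ∀ c b, Measurable (F c b) := by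
    intro c b
    apply Measurable.ennreal_tsum
    intro i
    exact measurable_const.indicator ((hMissMeas c i).diff (hMissMeas b i))
  have hFval : ∀ (c b : ℕ), ∀ ω, F c b ω = ((img b ω \ img c ω).card : ℝ≥0∞) := by
    intro c b ω
    rw [hFdef]
    dsimp only
    rw [PRDcard_tsum]
    congr 1
    funext i
    rw [Set.indicator_apply]
    congr 1
    simp only [Set.mem_diff, hMissMem, Finset.mem_sdiff, eq_iff_iff]
    tauto
  have hDP : ∀ (c b : ℕ), c ≤ b → ∀ i, P (Miss c i \ Miss b i)
      = ENNReal.ofReal ((1 - π i)^c - (1 - π i)^b) := by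
    intro c b hcb i
    rw [measure_diff (hMissSub hcb i) (hMissMeas b i).nullMeasurableSet (measure_ne_top P _),
      hMissP, hMissP, ENNReal.ofReal_sub _ (pow_nonneg (by linarith [hπle1 i]) b)]
  have hFint : ∀ (c b : ℕ), c ≤ b →
      ∫⁻ ω, F c b ω ∂P = ENNReal.ofReal (∑' i, ((1 - π i)^c - (1 - π i)^b)) := by
    intro c b hcb
    rw [hFdef]
    dsimp only
    rw [lintegral_tsum (f := fun i => (Miss c i \ Miss b i).indicator (1 : Ω → ℝ≥0∞))
      (fun i => (measurable_const.indicator ((hMissMeas c i).diff (hMissMeas b i))).aemeasurable)]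
    rw [ENNReal.ofReal_tsum_of_nonneg (fun i => hqnn i c b hcb) (hqsum c b hcb)]
    congr 1
    funext i
    rw [lintegral_indicator_one ((hMissMeas c i).diff (hMissMeas b i))]
    exact hDP c b hcb i
  -- Poisson distribution of N n
  have hPois : ∀ (n k : ℕ), P {ω | N (n:ℝ) ω = k}
      = ENNReal.ofReal (exp (-(n:ℝ)) * (n:ℝ)^k / k.factorial) := by
    intro n k
    have h := hNlaw 0 (n:ℝ) le_rfl (Nat.cast_nonneg n) k
    have hset : {ω | N (n:ℝ) ω - N 0 ω = k} = {ω | N (n:ℝ) ω = k} := by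
      ext ω
      simp [hN0 ω]
    rw [hset] at h
    rw [h]
    norm_num

  -- summability of S1
  have hS1nn : ∀ (n : ℕ) (i : ℕ), 0 ≤ π i * exp (-(3/4) * n * π i) := by
    intro n i
    have := (hπpos i).le
    positivity
  have hS1sum : ∀ n : ℕ, Summable (fun i => π i * exp (-(3/4) * n * π i)) := by
    intro n
    apply Summable.of_nonneg_of_le (hS1nn n) (fun i => ?_) hπs
    have h0 : (0:ℝ) ≤ (3/4) * n * π i := by have := (hπpos i).le; positivity
    have h1 : exp (-(3/4) * n * π i) ≤ 1 := by
      rw [Real.exp_le_one_iff]; linarith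
    nlinarith [(hπpos i).le]
  -- main argument
  apply Metric.tendsto_atTop.mpr
  intro δ hδ
  set K : ℝ := Real.sqrt (4/δ) with hK
  have hKpos : 0 < K := Real.sqrt_pos.mpr (by positivity)
  have hK2 : K^2 = 4/δ := Real.sq_sqrt (by positivity)
  have hη : 0 < ε*δ/(16*K) := by positivity
  have hev := analytic_main π hπpos hπsum _ hη
  have hev2 : ∀ᶠ n : ℕ in atTop, 1 ≤ K * Real.sqrt n ∧ 2*(K * Real.sqrt n) ≤ (n:ℝ)/4 := by
    rw [eventually_atTop]
    refine ⟨max (Nat.ceil ((8*K)^2)) (Nat.ceil ((1/K)^2)), fun n hn => ?_⟩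
    have h1 : ((8*K)^2 : ℝ) ≤ n := by
      refine le_trans (Nat.le_ceil _) ?_
      exact_mod_cast le_trans (le_max_left _ _) hn
    have h2 : ((1/K)^2 : ℝ) ≤ n := by
      refine le_trans (Nat.le_ceil _) ?_
      exact_mod_cast le_trans (le_max_right _ _) hn
    have hn0 : (0:ℝ) ≤ n := Nat.cast_nonneg n
    have hsq : Real.sqrt n * Real.sqrt n = (n:ℝ) := Real.mul_self_sqrt hn0
    have hs1 : 8*K ≤ Real.sqrt n := by
      calc 8*K = Real.sqrt ((8*K)^2) := (Real.sqrt_sq (by positivity)).symm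
        _ ≤ Real.sqrt n := Real.sqrt_le_sqrt h1
    have hs2 : 1/K ≤ Real.sqrt n := by
      calc 1/K = Real.sqrt ((1/K)^2) := (Real.sqrt_sq (by positivity)).symm
        _ ≤ Real.sqrt n := Real.sqrt_le_sqrt h2
    constructor
    · rw [div_le_iff₀ hKpos] at hs2
      nlinarith
    · nlinarith [Real.sqrt_nonneg n]
  have hfinal : ∀ᶠ n : ℕ in atTop,
      dist ((P {ω | ε * σ (n:ℕ) ≤ |(R (N (n:ℕ) ω) ω : ℝ) - (R (n:ℕ) ω : ℝ)|}).toReal) 0 < δ := by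
    filter_upwards [hev, hev2, eventually_ge_atTop 1] with n hAn hBn hn1
    have hnR : (1:ℝ) ≤ n := by exact_mod_cast hn1
    have hsn : (0:ℝ) < Real.sqrt n := Real.sqrt_pos.mpr (by linarith)
    have hsqn : Real.sqrt n * Real.sqrt n = (n:ℝ) := Real.mul_self_sqrt (by linarith)
    set a : ℕ := Nat.ceil (K * Real.sqrt n) with ha
    set c : ℕ := n - a with hcdef
    set b : ℕ := n + a with hbdef
    have haK : K * Real.sqrt n ≤ (a:ℝ) := Nat.le_ceil _
    have ha1 : (1:ℝ) ≤ (a:ℝ) := le_trans hBn.1 haK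
    have ha2 : (a:ℝ) ≤ 2*(K * Real.sqrt n) := by
      have := Nat.ceil_lt_add_one (show (0:ℝ) ≤ K * Real.sqrt n by positivity)
      have h1 := hBn.1
      rw [ha]
      push_cast
      linarith
    have han : (a:ℝ) ≤ (n:ℝ)/4 := le_trans ha2 hBn.2
    have hacn : a ≤ n := by
      have : (a:ℝ) ≤ (n:ℝ) := by linarith
      exact_mod_cast this
    have hcb : c ≤ b := by omega
    have hcn : c ≤ n := by omega
    have hnb : n ≤ b := by omega
    have hcR : (c:ℝ) = (n:ℝ) - a := by
      rw [hcdef]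
      push_cast [Nat.cast_sub hacn]
      ring
    have hc34 : (3/4)*(n:ℝ) ≤ (c:ℝ) := by rw [hcR]; linarith
    have hσn : σ ((n:ℕ):ℝ) = Real.sqrt (V n) := hσV n
    have hσpos : 0 < σ ((n:ℕ):ℝ) := by
      rw [hσn]
      exact Real.sqrt_pos.mpr (hVpos n hn1)
    have hεσ : 0 < ε * σ ((n:ℕ):ℝ) := mul_pos hε hσpos
    set A : Set Ω := {ω | N ((n:ℕ):ℝ) ω < c ∨ b < N ((n:ℕ):ℝ) ω} with hAdef
    set B : Set Ω := {ω | ENNReal.ofReal (ε * σ ((n:ℕ):ℝ)) ≤ F c b ω} with hBdef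
    -- inclusion
    have hEsub : {ω | ε * σ ((n:ℕ):ℝ) ≤ |(R (N ((n:ℕ):ℝ) ω) ω : ℝ) - (R n ω : ℝ)|} ⊆ A ∪ B := by
      intro ω hω
      by_cases hAmem : ω ∈ A
      · exact Or.inl hAmem
      · right
        rw [hAdef] at hAmem
        simp only [Set.mem_setOf_eq, not_or, not_lt] at hAmem
        obtain ⟨h1, h2⟩ := hAmem
        have hmono : ∀ {m m' : ℕ}, m ≤ m' → R m ω ≤ R m' ω := by
          intro m m' h
          rw [hR, hR]
          apply Finset.card_le_card
          apply Finset.image_subset_image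
          intro x hx
          exact Finset.mem_range.mpr (lt_of_lt_of_le (Finset.mem_range.mp hx) h)
        have e1 : R c ω ≤ R (N ((n:ℕ):ℝ) ω) ω := hmono h1
        have e2 : R (N ((n:ℕ):ℝ) ω) ω ≤ R b ω := hmono h2
        have e3 : R c ω ≤ R n ω := hmono hcn
        have e4 : R n ω ≤ R b ω := hmono hnb
        have habs : |(R (N ((n:ℕ):ℝ) ω) ω : ℝ) - (R n ω : ℝ)| ≤ (R b ω : ℝ) - (R c ω : ℝ) := by
          rw [abs_sub_le_iff]
          constructor
          · have e2' : ((R (N ((n:ℕ):ℝ) ω) ω : ℕ):ℝ) ≤ (R b ω : ℝ) := by exact_mod_cast e2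
            have e3' : ((R c ω : ℕ):ℝ) ≤ (R n ω : ℝ) := by exact_mod_cast e3
            linarith
          · have e1' : ((R c ω : ℕ):ℝ) ≤ (R (N ((n:ℕ):ℝ) ω) ω : ℝ) := by exact_mod_cast e1
            have e4' : ((R n ω : ℕ):ℝ) ≤ (R b ω : ℝ) := by exact_mod_cast e4
            linarith
        have hcard : ((img b ω \ img c ω).card : ℝ) = (R b ω : ℝ) - (R c ω : ℝ) := by
          rw [hR, hR]
          exact Finset.cast_card_sdiff (Finset.image_subset_image
            (fun x hx => Finset.mem_range.mpr (lt_of_lt_of_le (Finset.mem_range.mp hx) hcb)))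
        have h5 : ε * σ ((n:ℕ):ℝ) ≤ ((img b ω \ img c ω).card : ℝ) := by
          rw [hcard]
          exact le_trans hω habs
        rw [hBdef]
        show ENNReal.ofReal (ε * σ ((n:ℕ):ℝ)) ≤ F c b ω
        rw [hFval c b ω]
        calc ENNReal.ofReal (ε * σ ((n:ℕ):ℝ))
            ≤ ENNReal.ofReal (((img b ω \ img c ω).card : ℝ)) := ENNReal.ofReal_le_ofReal h5
          _ = ((img b ω \ img c ω).card : ℝ≥0∞) := ENNReal.ofReal_natCast _
    -- bound on P A
    have hPA : P A ≤ ENNReal.ofReal (δ/4) := by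
      have hsub : A ⊆ ⋃ k : ℕ, {ω | N ((n:ℕ):ℝ) ω = k ∧ (k < c ∨ b < k)} := by
        intro ω hω
        exact Set.mem_iUnion.mpr ⟨N ((n:ℕ):ℝ) ω, rfl, hω⟩
      have hterm : ∀ k : ℕ, P {ω | N ((n:ℕ):ℝ) ω = k ∧ (k < c ∨ b < k)}
          ≤ ENNReal.ofReal (((k:ℝ) - n)^2/(a:ℝ)^2 * (exp (-(n:ℝ)) * (n:ℝ)^k / k.factorial)) := by
        intro k
        by_cases hbad : k < c ∨ b < k
        · have hset : {ω | N ((n:ℕ):ℝ) ω = k ∧ (k < c ∨ b < k)} = {ω | N ((n:ℕ):ℝ) ω = k} :=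
            Set.ext fun ω => ⟨fun h => h.1, fun h => ⟨h, hbad⟩⟩
          rw [hset, hPois n k]
          apply ENNReal.ofReal_le_ofReal
          have h1 : (a:ℝ) ≤ |(k:ℝ) - n| := by
            rcases hbad with h | h
            · have hlt : k + a < n := by omega
              have hltR : (k:ℝ) + a < n := by exact_mod_cast hlt
              rw [abs_sub_comm, abs_of_nonneg (by linarith)]
              linarith
            · have hlt : n + a < k := by omega
              have hltR : (n:ℝ) + a < k := by exact_mod_cast hlt
              rw [abs_of_nonneg (by linarith)]
              linarith
          have hfac : 1 ≤ ((k:ℝ) - n)^2/(a:ℝ)^2 := by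
            rw [le_div_iff₀ (by positivity)]
            nlinarith [sq_abs ((k:ℝ) - n), abs_nonneg ((k:ℝ) - n)]
          have hpmf : (0:ℝ) ≤ exp (-(n:ℝ)) * (n:ℝ)^k / k.factorial := by positivity
          nlinarith
        · have hset : {ω | N ((n:ℕ):ℝ) ω = k ∧ (k < c ∨ b < k)} = (∅ : Set Ω) :=
            Set.ext fun ω => ⟨fun h => absurd h.2 hbad, False.elim⟩
          rw [hset, measure_empty]
          exact zero_le
      have hg : HasSum (fun k : ℕ => ((k:ℝ) - n)^2/(a:ℝ)^2 * (exp (-(n:ℝ)) * (n:ℝ)^k / k.factorial))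
          (exp (-(n:ℝ))/(a:ℝ)^2 * ((n:ℝ) * exp (n:ℝ))) := by
        have h := (hs_poisson_var (n:ℝ)).mul_left (exp (-(n:ℝ))/(a:ℝ)^2)
        have e : (fun k : ℕ => ((k:ℝ) - n)^2/(a:ℝ)^2 * (exp (-(n:ℝ)) * (n:ℝ)^k / k.factorial))
            = fun k : ℕ => exp (-(n:ℝ))/(a:ℝ)^2 * (((k:ℝ) - n)^2 * (n:ℝ)^k / k.factorial) := by
          funext k
          ring
        rw [e]; exact h
      have hgnn : ∀ k : ℕ, 0 ≤ ((k:ℝ) - n)^2/(a:ℝ)^2 * (exp (-(n:ℝ)) * (n:ℝ)^k / k.factorial) := by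
        intro k
        positivity
      have hval : exp (-(n:ℝ))/(a:ℝ)^2 * ((n:ℝ) * exp (n:ℝ)) = (n:ℝ)/(a:ℝ)^2 := by
        have hinv : exp (-(n:ℝ)) * exp (n:ℝ) = 1 := by rw [← Real.exp_add]; simp
        have hane : (a:ℝ) ≠ 0 := by linarith
        field_simp
        linear_combination hinv
      calc P A ≤ ∑' k, P {ω | N ((n:ℕ):ℝ) ω = k ∧ (k < c ∨ b < k)} :=
            (measure_mono hsub).trans (measure_iUnion_le _)
        _ ≤ ∑' k : ℕ, ENNReal.ofReal (((k:ℝ) - n)^2/(a:ℝ)^2 * (exp (-(n:ℝ)) * (n:ℝ)^k / k.factorial)) :=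
            ENNReal.tsum_le_tsum hterm
        _ = ENNReal.ofReal (∑' k : ℕ, ((k:ℝ) - n)^2/(a:ℝ)^2 * (exp (-(n:ℝ)) * (n:ℝ)^k / k.factorial)) :=
            (ENNReal.ofReal_tsum_of_nonneg hgnn hg.summable).symm
        _ = ENNReal.ofReal ((n:ℝ)/(a:ℝ)^2) := by rw [hg.tsum_eq, hval]
        _ ≤ ENNReal.ofReal (δ/4) := by
            apply ENNReal.ofReal_le_ofReal
            have h7 : (n:ℝ)/(a:ℝ)^2 ≤ 1/K^2 := by
              rw [div_le_div_iff₀ (by positivity) (by positivity)]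
              nlinarith [haK, hsqn, hsn.le, hKpos.le]
            have h8 : 1/K^2 = δ/4 := by
              rw [hK2]
              field_simp
            linarith
    -- bound on P B
    have hPB : P B ≤ ENNReal.ofReal (δ/4) := by
      have hmarkov := meas_ge_le_lintegral_div (μ := P) (hFmeas c b).aemeasurable
        (ne_of_gt (ENNReal.ofReal_pos.mpr hεσ)) ENNReal.ofReal_ne_top
      have hT : ∑' i, ((1 - π i)^c - (1 - π i)^b) ≤ δ/4 * (ε * σ ((n:ℕ):ℝ)) := by
        have hterm : ∀ i, (1 - π i)^c - (1 - π i)^b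
            ≤ (2*(a:ℝ)) * (π i * exp (-(3/4) * n * π i)) := by
          intro i
          have h0 : (0:ℝ) ≤ 1 - π i := by linarith [hπle1 i]
          have hqc : (1 - π i)^c ≤ exp (-(3/4) * n * π i) := by
            calc (1 - π i)^c ≤ exp (-π i)^c := by
                  apply pow_le_pow_left₀ h0
                  linarith [Real.add_one_le_exp (-π i)]
              _ = exp (-(c:ℝ) * π i) := by
                  rw [← Real.exp_nat_mul]
                  ring_nf
              _ ≤ exp (-(3/4) * n * π i) := by
                  apply Real.exp_le_exp.mpr
                  nlinarith [hπpos i]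
          have hsplit : (1 - π i)^b = (1 - π i)^c * (1 - π i)^(2*a) := by
            rw [← pow_add]
            congr 1
            omega
          have hb2 : 1 - (1 - π i)^(2*a) ≤ (2*(a:ℝ)) * π i := by
            have := hqBern i (2*a)
            push_cast at this ⊢
            linarith
          have hq2a : (1 - π i)^(2*a) ≤ 1 := pow_le_one₀ h0 (by linarith [hπpos i])
          calc (1 - π i)^c - (1 - π i)^b = (1 - π i)^c * (1 - (1 - π i)^(2*a)) := by
                rw [hsplit]; ring
            _ ≤ exp (-(3/4) * n * π i) * ((2*(a:ℝ)) * π i) := by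
                apply mul_le_mul hqc hb2 (by linarith) (le_of_lt (Real.exp_pos _))
            _ = (2*(a:ℝ)) * (π i * exp (-(3/4) * n * π i)) := by ring
        have hTsum := Summable.tsum_le_tsum hterm (hqsum c b hcb) ((hS1sum n).mul_left (2*(a:ℝ)))
        rw [tsum_mul_left] at hTsum
        have hS1tnn : 0 ≤ ∑' i, π i * exp (-(3/4) * n * π i) :=
          tsum_nonneg (hS1nn n)
        have hAn' : Real.sqrt n * ∑' i, π i * exp (-(3/4) * n * π i)
            ≤ (ε*δ/(16*K)) * Real.sqrt (V n) := hAn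
        calc ∑' i, ((1 - π i)^c - (1 - π i)^b)
            ≤ 2*(a:ℝ) * ∑' i, π i * exp (-(3/4) * n * π i) := hTsum
          _ ≤ 4*K*Real.sqrt n * ∑' i, π i * exp (-(3/4) * n * π i) := by
              nlinarith [ha2, hS1tnn]
          _ = 4*K * (Real.sqrt n * ∑' i, π i * exp (-(3/4) * n * π i)) := by ring
          _ ≤ 4*K * ((ε*δ/(16*K)) * Real.sqrt (V n)) := by
              nlinarith [hKpos]
          _ = δ/4 * (ε * Real.sqrt (V n)) := by
              field_simp
              ring
          _ = δ/4 * (ε * σ ((n:ℕ):ℝ)) := by rw [hσn]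
      refine le_trans hmarkov ?_
      rw [hFint c b hcb]
      apply ENNReal.div_le_of_le_mul
      rw [← ENNReal.ofReal_mul (by positivity)]
      exact ENNReal.ofReal_le_ofReal hT
    -- conclude
    have hPE : P {ω | ε * σ ((n:ℕ):ℝ) ≤ |(R (N ((n:ℕ):ℝ) ω) ω : ℝ) - (R n ω : ℝ)|}
        ≤ ENNReal.ofReal (δ/2) := by
      calc P {ω | ε * σ ((n:ℕ):ℝ) ≤ |(R (N ((n:ℕ):ℝ) ω) ω : ℝ) - (R n ω : ℝ)|}
          ≤ P (A ∪ B) := measure_mono hEsub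
        _ ≤ P A + P B := measure_union_le A B
        _ ≤ ENNReal.ofReal (δ/4) + ENNReal.ofReal (δ/4) := add_le_add hPA hPB
        _ = ENNReal.ofReal (δ/2) := by
            rw [← ENNReal.ofReal_add (by positivity) (by positivity)]
            congr 1
            ring
    rw [Real.dist_eq, sub_zero, abs_of_nonneg ENNReal.toReal_nonneg]
    calc (P {ω | ε * σ ((n:ℕ):ℝ) ≤ |(R (N ((n:ℕ):ℝ) ω) ω : ℝ) - (R n ω : ℝ)|}).toReal
        ≤ (ENNReal.ofReal (δ/2)).toReal := ENNReal.toReal_mono ENNReal.ofReal_ne_top hPE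
      _ = δ/2 := ENNReal.toReal_ofReal (by positivity)
      _ < δ := by linarith
  exact eventually_atTop.mp hfinal
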